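/- Under the unnormalized Ricci flow on SU(2), A' = (4(B-C)² - 4A²)/(BC), B' = (4(C-A)² - 4B²)/(AC), the difference satisfies (A-B)' = -4(A-B)(A² + 2AB + B² - C²)/(ABC). Consequently, if A, B, C are positive and A > B with A² + 2AB + B² > C² throughout, the difference A - B remains positive. -/

import Mathlib

theorem su2_ricci_flow_difference (A B C : ℝ → ℝ)
    (hApos : ∀ t, 0 < A t) (hBpos : ∀ t, 0 < B t) (hCpos : ∀ t, 0 < C t)
    (hA : ∀ t, HasDerivAt A ((4*(B t - C t)^2 - 4*(A t)^2)/(B t * C t)) t)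
    (hB : ∀ t, HasDerivAt B ((4*(C t - A t)^2 - 4*(B t)^2)/(A t * C t)) t)
    (hC : ∀ t, HasDerivAt C ((4*(A t - B t)^2 - 4*(C t)^2)/(A t * B t)) t) :
    (∀ t, HasDerivAt (fun s => A s - B s)
        (-4*(A t - B t)*((A t)^2 + 2*(A t)*(B t) + (B t)^2 - (C t)^2)/(A t * B t * C t)) t) ∧
    (A 0 > B 0 → (∀ t, (A t)^2 + 2*(A t)*(B t) + (B t)^2 > (C t)^2) →
      ∀ t, 0 ≤ t → A t > B t) := by
  have hD : ∀ t, HasDerivAt (fun s => A s - B s)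
      (-4*(A t - B t)*((A t)^2 + 2*(A t)*(B t) + (B t)^2 - (C t)^2)/(A t * B t * C t)) t := by
    intro t
    have h := (hA t).sub (hB t)
    refine h.congr_deriv ?_
    have ha := (hApos t).ne'
    have hb := (hBpos t).ne'
    have hc := (hCpos t).ne'
    field_simp
    ring
  refine ⟨hD, ?_⟩
  intro h0 _hcond t _ht
  set c : ℝ → ℝ := fun t =>
    -4*((A t)^2 + 2*(A t)*(B t) + (B t)^2 - (C t)^2)/(A t * B t * C t) with hcdef
  have hAc : Continuous A := by
    rw [continuous_iff_continuousAt]; exact fun t => (hA t).continuousAt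
  have hBc : Continuous B := by
    rw [continuous_iff_continuousAt]; exact fun t => (hB t).continuousAt
  have hCc : Continuous C := by
    rw [continuous_iff_continuousAt]; exact fun t => (hC t).continuousAt
  have hcc : Continuous c := by
    apply Continuous.div
    · continuity
    · continuity
    · intro t
      exact (mul_pos (mul_pos (hApos t) (hBpos t)) (hCpos t)).ne'
  set G : ℝ → ℝ := fun t => ∫ s in (0:ℝ)..t, c s with hGdef
  have hG : ∀ t, HasDerivAt G (c t) t := by
    intro t
    exact intervalIntegral.integral_hasDerivAt_right
      (hcc.intervalIntegrable _ _)
      (hcc.stronglyMeasurableAtFilter _ _)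
      hcc.continuousAt
  set h : ℝ → ℝ := fun t => (A t - B t) * Real.exp (-G t) with hhdef
  have hh : ∀ t, HasDerivAt h 0 t := by
    intro t
    have := (hD t).mul (((hG t).neg).exp)
    refine this.congr_deriv ?_
    have ha := (hApos t).ne'
    have hb := (hBpos t).ne'
    have hc := (hCpos t).ne'
    have : -4*(A t - B t)*((A t)^2 + 2*(A t)*(B t) + (B t)^2 - (C t)^2)/(A t * B t * C t)
        = c t * (A t - B t) := by
      rw [hcdef]; field_simp
    rw [this]
    ring
  have hconst : ∀ x, h x = h 0 := by
    have hdiff : Differentiable ℝ h := fun x => (hh x).differentiableAt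
    have hder : ∀ x, deriv h x = 0 := fun x => (hh x).deriv
    intro x
    exact is_const_of_deriv_eq_zero hdiff hder x 0
  have hG0 : G 0 = 0 := intervalIntegral.integral_same
  have hh0 : h 0 = A 0 - B 0 := by simp [hhdef, hG0]
  have hpos : 0 < h t := by
    rw [hconst t, hh0]; linarith
  have : A t - B t = h t * Real.exp (G t) := by
    rw [hhdef]
    simp only []
    rw [mul_assoc, ← Real.exp_add]
    simp
  nlinarith [Real.exp_pos (G t), this, hpos]
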